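/- arXiv:1510.00945 — 2 statements merged into one kernel-verified Lean document; each statement's English description precedes it below -/
import Mathlib

section
/- Gallai's edge identity: for every finite simple graph G on vertex set V with no isolated vertices (every vertex has degree at least 1), α'(G) + β'(G) = |V|, where α'(G) is the maximum size of a matching of G and β'(G) is the minimum size of an edge cover of G. -/
open Finset

section aux
variable {V : Type*} [Fintype V] [DecidableEq V] (G : SimpleGraph V)

private def evs (e : Sym2 V) : Finset V := Finset.univ.filter (· ∈ e)

private lemma mem_evs {e : Sym2 V} {v : V} : v ∈ evs e ↔ v ∈ e := by
  simp [evs]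

private lemma evs_card {e : Sym2 V} (he : ¬ e.IsDiag) : (evs e).card = 2 := by
  induction e with
  | _ a b =>
    have hab : a ≠ b := by simpa using he
    have : evs s(a, b) = {a, b} := by
      ext v; simp [mem_evs, Sym2.mem_iff]
    rw [this, Finset.card_insert_of_notMem (by simp [hab]), Finset.card_singleton]

private lemma covered_card {M : Finset (Sym2 V)}
    (hE : ∀ e ∈ M, e ∈ G.edgeSet)
    (hM : ∀ e ∈ M, ∀ f ∈ M, e ≠ f → ∀ v : V, v ∈ e → v ∉ f) :
    (Finset.univ.filter (fun v : V => ∃ e ∈ M, v ∈ e)).card = 2 * M.card := by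
  have hbi : (Finset.univ.filter (fun v : V => ∃ e ∈ M, v ∈ e)) =
      M.biUnion evs := by
    ext v; simp [mem_evs]
  rw [hbi, Finset.card_biUnion]
  · rw [Finset.sum_congr rfl (fun e heM =>
      evs_card (G.not_isDiag_of_mem_edgeSet (hE e heM)))]
    simp [Nat.mul_comm]
  · intro e he f hf hef
    rw [Function.onFun, Finset.disjoint_left]
    intro v hv hv'
    exact hM e he f hf hef v (mem_evs.1 hv) (mem_evs.1 hv')

/-- from a matching build an edge cover of size ≤ |V| - |M| -/
private lemma cover_of_matching (h : ∀ v : V, ∃ e ∈ G.edgeSet, v ∈ e)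
    {M : Finset (Sym2 V)} (hE : ∀ e ∈ M, e ∈ G.edgeSet)
    (hM : ∀ e ∈ M, ∀ f ∈ M, e ≠ f → ∀ v : V, v ∈ e → v ∉ f) :
    ∃ L : Finset (Sym2 V), (∀ e ∈ L, e ∈ G.edgeSet) ∧ (∀ v : V, ∃ e ∈ L, v ∈ e) ∧
      L.card + M.card ≤ Fintype.card V := by
  classical
  choose g hg1 hg2 using h
  set cov := Finset.univ.filter (fun v : V => ∃ e ∈ M, v ∈ e) with hcov
  set unc := Finset.univ.filter (fun v : V => ¬ ∃ e ∈ M, v ∈ e) with hunc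
  refine ⟨M ∪ unc.image g, ?_, ?_, ?_⟩
  · intro e he
    rcases Finset.mem_union.mp he with he | he
    · exact hE e he
    · obtain ⟨v, _, rfl⟩ := Finset.mem_image.mp he
      exact hg1 v
  · intro v
    by_cases hv : ∃ e ∈ M, v ∈ e
    · obtain ⟨e, he, hve⟩ := hv
      exact ⟨e, Finset.mem_union_left _ he, hve⟩
    · exact ⟨g v, Finset.mem_union_right _ (Finset.mem_image_of_mem g
        (Finset.mem_filter.mpr ⟨Finset.mem_univ v, hv⟩)), hg2 v⟩
  · have h1 : (M ∪ unc.image g).card ≤ M.card + unc.card :=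
      le_trans (Finset.card_union_le _ _) (by
        exact Nat.add_le_add_left (Finset.card_image_le) _)
    have h2 : cov.card = 2 * M.card := covered_card G hE hM
    have h3 : cov.card + unc.card = Fintype.card V := by
      rw [hcov, hunc, Finset.card_filter_add_card_filter_not]
      rfl
    omega

/-- from an edge cover extract a matching with |V| ≤ |M| + |L| -/
private lemma matching_of_cover {L : Finset (Sym2 V)}
    (hLE : ∀ e ∈ L, e ∈ G.edgeSet) (hLC : ∀ v : V, ∃ e ∈ L, v ∈ e) :
    ∃ M : Finset (Sym2 V), (∀ e ∈ M, e ∈ G.edgeSet) ∧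
      (∀ e ∈ M, ∀ f ∈ M, e ≠ f → ∀ v : V, v ∈ e → v ∉ f) ∧
      Fintype.card V ≤ M.card + L.card := by
  classical
  set S := L.powerset.filter
    (fun M => ∀ e ∈ M, ∀ f ∈ M, e ≠ f → ∀ v : V, v ∈ e → v ∉ f) with hS
  have hSne : S.Nonempty := ⟨∅, by simp [hS]⟩
  obtain ⟨M, hMS, hMmax⟩ := Finset.exists_max_image S Finset.card hSne
  have hMsub : M ⊆ L := Finset.mem_powerset.mp (Finset.mem_filter.mp hMS).1
  have hM : ∀ e ∈ M, ∀ f ∈ M, e ≠ f → ∀ v : V, v ∈ e → v ∉ f :=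
    (Finset.mem_filter.mp hMS).2
  have hE : ∀ e ∈ M, e ∈ G.edgeSet := fun e he => hLE e (hMsub he)
  refine ⟨M, hE, hM, ?_⟩
  choose gv hgv1 hgv2 using hLC
  set unc := Finset.univ.filter (fun v : V => ¬ ∃ e ∈ M, v ∈ e) with hunc
  have huncM : ∀ v ∈ unc, ∀ e ∈ M, v ∉ e := by
    intro v hv e he hve
    exact (Finset.mem_filter.mp hv).2 ⟨e, he, hve⟩
  -- injective map from uncovered vertices to L \ M
  have hinj : Set.InjOn gv unc := by
    intro v hv w hw hvw
    by_contra hne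
    -- gv v = gv w contains both v and w, both uncovered
    have hve : v ∈ gv v := hgv2 v
    have hwe : w ∈ gv v := hvw ▸ hgv2 w
    have heM : gv v ∉ M := fun hc => huncM v hv _ hc hve
    -- insert gv v into M gives a bigger matching in S : contradiction
    have heq : gv v = s(v, w) := ((Sym2.mem_and_mem_iff hne).mp ⟨hve, hwe⟩)
    have honly : ∀ u : V, u ∈ gv v → u = v ∨ u = w := by
      intro u hu
      rw [heq] at hu
      exact Sym2.mem_iff.mp hu
    have hins : insert (gv v) M ∈ S := by
      rw [hS, Finset.mem_filter, Finset.mem_powerset]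
      constructor
      · exact Finset.insert_subset (hgv1 v) hMsub
      · intro e he f hf hef u hue huf
        rcases Finset.mem_insert.mp he with rfl | he <;>
          rcases Finset.mem_insert.mp hf with rfl | hf
        · exact hef rfl
        · rcases honly u hue with h | h
          · exact huncM v hv f hf (h ▸ huf)
          · exact huncM w hw f hf (h ▸ huf)
        · rcases honly u huf with h | h
          · exact huncM v hv e he (h ▸ hue)
          · exact huncM w hw e he (h ▸ hue)
        · exact hM e he f hf hef u hue huf
    have := hMmax _ hins
    rw [Finset.card_insert_of_notMem heM] at this
    omega
  have himg : ∀ v ∈ unc, gv v ∈ L \ M := by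
    intro v hv
    exact Finset.mem_sdiff.mpr ⟨hgv1 v, fun hc => huncM v hv _ hc (hgv2 v)⟩
  have hcard : unc.card ≤ (L \ M).card :=
    Finset.card_le_card_of_injOn gv himg hinj
  have h2 : (Finset.univ.filter (fun v : V => ∃ e ∈ M, v ∈ e)).card = 2 * M.card :=
    covered_card G hE hM
  have h3 : (Finset.univ.filter (fun v : V => ∃ e ∈ M, v ∈ e)).card + unc.card
      = Fintype.card V := by
    rw [hunc, Finset.card_filter_add_card_filter_not]
    rfl
  have h4 : (L \ M).card = L.card - M.card := Finset.card_sdiff_of_subset hMsub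
  have h5 : M.card ≤ L.card := Finset.card_le_card hMsub
  omega

end aux

theorem gallai_edge_identity
    {V : Type*} [Fintype V] (G : SimpleGraph V) [DecidableRel G.Adj]
    (h : ∀ v : V, 1 ≤ G.degree v) :
    sSup {n : ℕ | ∃ M : Finset (Sym2 V), (∀ e ∈ M, e ∈ G.edgeSet) ∧
        (∀ e ∈ M, ∀ f ∈ M, e ≠ f → ∀ v : V, v ∈ e → v ∉ f) ∧ M.card = n}
      + sInf {n : ℕ | ∃ L : Finset (Sym2 V), (∀ e ∈ L, e ∈ G.edgeSet) ∧
          (∀ v : V, ∃ e ∈ L, v ∈ e) ∧ L.card = n}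
      = Fintype.card V := by
  classical
  set A := {n : ℕ | ∃ M : Finset (Sym2 V), (∀ e ∈ M, e ∈ G.edgeSet) ∧
      (∀ e ∈ M, ∀ f ∈ M, e ≠ f → ∀ v : V, v ∈ e → v ∉ f) ∧ M.card = n} with hA
  set B := {n : ℕ | ∃ L : Finset (Sym2 V), (∀ e ∈ L, e ∈ G.edgeSet) ∧
      (∀ v : V, ∃ e ∈ L, v ∈ e) ∧ L.card = n} with hB
  have hAne : A.Nonempty := ⟨0, ∅, by simp, by simp, by simp⟩
  have hAbdd : BddAbove A := by
    refine ⟨G.edgeFinset.card, ?_⟩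
    rintro n ⟨M, hE, -, rfl⟩
    exact Finset.card_le_card (fun e he => SimpleGraph.mem_edgeFinset.mpr (hE e he))
  have hBne : B.Nonempty := by
    refine ⟨G.edgeFinset.card, G.edgeFinset, ?_, ?_, rfl⟩
    · intro e he; exact SimpleGraph.mem_edgeFinset.mp he
    · intro v
      obtain ⟨w, hw⟩ := Finset.card_pos.mp (h v)
      rw [SimpleGraph.mem_neighborFinset] at hw
      exact ⟨s(v, w), SimpleGraph.mem_edgeFinset.mpr hw, Sym2.mem_mk_left _ _⟩
  obtain ⟨M, hME, hMm, hMc⟩ := Nat.sSup_mem hAne hAbdd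
  obtain ⟨L, hLE, hLC, hLc⟩ := Nat.sInf_mem hBne
  -- upper bound: sSup A + sInf B ≤ card V
  have h' : ∀ v : V, ∃ e ∈ G.edgeSet, v ∈ e := by
    intro v
    obtain ⟨w, hw⟩ := Finset.card_pos.mp (h v)
    rw [SimpleGraph.mem_neighborFinset] at hw
    exact ⟨s(v, w), hw, Sym2.mem_mk_left _ _⟩
  obtain ⟨L1, hL1E, hL1C, hL1⟩ := cover_of_matching G h' hME hMm
  have hb1 : sInf B ≤ L1.card := Nat.sInf_le ⟨L1, hL1E, hL1C, rfl⟩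
  -- lower bound
  obtain ⟨M1, hM1E, hM1m, hM1⟩ := matching_of_cover G hLE hLC
  have hb2 : M1.card ≤ sSup A := le_csSup hAbdd ⟨M1, hM1E, hM1m, rfl⟩
  omega
end

section
/- Vizing's theorem: every finite simple graph G admits a proper edge coloring with Δ(G) + 1 colors, i.e., there is a function assigning to each edge of G one of Δ(G) + 1 colors such that any two distinct edges sharing an endpoint receive different colors. -/
open scoped Classical

namespace VizingProof

variable {V : Type*}

/-- A partial proper edge coloring of `G` with `n` colors. -/
structure PC (G : SimpleGraph V) (n : ℕ) where
  c : V → V → Option (Fin n)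
  symm : ∀ u v, c u v = c v u
  adj : ∀ u v, c u v ≠ none → G.Adj u v
  proper : ∀ {u v w : V} {γ : Fin n}, c u v = some γ → c u w = some γ → v = w

variable {G : SimpleGraph V} {n : ℕ}

def Free (c : PC G n) (v : V) (γ : Fin n) : Prop := ∀ u, c.c v u ≠ some γ

def Pair (u v x y : V) : Prop := (u = x ∧ v = y) ∨ (u = y ∧ v = x)

lemma pair_symm {u v x y : V} (h : Pair u v x y) : Pair v u x y := by
  unfold Pair at *; tauto

noncomputable def upd (c : V → V → Option (Fin n)) (x y : V) (γ : Option (Fin n)) :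
    V → V → Option (Fin n) :=
  fun u v => if Pair u v x y then γ else c u v

lemma upd_of_pair {c : V → V → Option (Fin n)} {x y u v : V} {γ} (h : Pair u v x y) :
    upd c x y γ u v = γ := if_pos h

lemma upd_of_not_pair {c : V → V → Option (Fin n)} {x y u v : V} {γ} (h : ¬ Pair u v x y) :
    upd c x y γ u v = c u v := if_neg h

/-- Erase the color of edge `x y`. -/
noncomputable def erase (c : PC G n) (x y : V) : PC G n where
  c := upd c.c x y none
  symm u v := by
    unfold upd
    by_cases h : Pair u v x y
    · rw [if_pos h, if_pos (pair_symm h)]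
    · rw [if_neg h, if_neg (fun hh => h (pair_symm hh)), c.symm]
  adj u v h := by
    unfold upd at h
    by_cases hp : Pair u v x y
    · rw [if_pos hp] at h; exact absurd rfl h
    · rw [if_neg hp] at h; exact c.adj u v h
  proper {u v w γ} h1 h2 := by
    unfold upd at h1 h2
    by_cases hp1 : Pair u v x y
    · rw [if_pos hp1] at h1; exact absurd h1 (by simp)
    · by_cases hp2 : Pair u w x y
      · rw [if_pos hp2] at h2; exact absurd h2 (by simp)
      · rw [if_neg hp1] at h1; rw [if_neg hp2] at h2; exact c.proper h1 h2

lemma erase_c_eq (c : PC G n) (x y u v : V) (h : ¬ Pair u v x y) :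
    (erase c x y).c u v = c.c u v := upd_of_not_pair h

lemma erase_c_pair (c : PC G n) (x y u v : V) (h : Pair u v x y) :
    (erase c x y).c u v = none := upd_of_pair h

/-- Assign color `γ` to edge `x y`, provided this is legal; otherwise do nothing. -/
noncomputable def assign (c : PC G n) (x y : V) (γ : Fin n) : PC G n :=
  if h : G.Adj x y ∧ Free c x γ ∧ Free c y γ then
    { c := upd c.c x y (some γ)
      symm := fun u v => by
        unfold upd
        by_cases hp : Pair u v x y
        · rw [if_pos hp, if_pos (pair_symm hp)]
        · rw [if_neg hp, if_neg (fun hh => hp (pair_symm hh)), c.symm]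
      adj := fun u v hne => by
        unfold upd at hne
        by_cases hp : Pair u v x y
        · rcases hp with ⟨rfl, rfl⟩ | ⟨rfl, rfl⟩
          · exact h.1
          · exact h.1.symm
        · rw [if_neg hp] at hne; exact c.adj u v hne
      proper := fun {u v w δ} h1 h2 => by
        unfold upd at h1 h2
        by_cases hp1 : Pair u v x y <;> by_cases hp2 : Pair u w x y
        · have hxy := G.ne_of_adj h.1
          rcases hp1 with ⟨rfl, rfl⟩ | ⟨rfl, rfl⟩
          · rcases hp2 with ⟨-, rfl⟩ | ⟨h3, -⟩
            · rfl
            · exact absurd h3 hxy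
          · rcases hp2 with ⟨h3, -⟩ | ⟨-, rfl⟩
            · exact absurd h3 hxy.symm
            · rfl
        · rw [if_pos hp1] at h1
          rw [if_neg hp2] at h2
          have hδ : δ = γ := by simpa using h1.symm
          subst hδ
          rcases hp1 with ⟨rfl, rfl⟩ | ⟨rfl, rfl⟩
          · exact absurd h2 (h.2.1 w)
          · exact absurd h2 (h.2.2 w)
        · rw [if_neg hp1] at h1
          rw [if_pos hp2] at h2
          have hδ : δ = γ := by simpa using h2.symm
          subst hδ
          rcases hp2 with ⟨rfl, rfl⟩ | ⟨rfl, rfl⟩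
          · exact absurd h1 (h.2.1 v)
          · exact absurd h1 (h.2.2 v)
        · rw [if_neg hp1] at h1; rw [if_neg hp2] at h2; exact c.proper h1 h2 }
  else c

lemma assign_c (c : PC G n) {x y : V} {γ : Fin n}
    (h1 : G.Adj x y) (h2 : Free c x γ) (h3 : Free c y γ) :
    (assign c x y γ).c = upd c.c x y (some γ) := by
  unfold assign
  rw [dif_pos ⟨h1, h2, h3⟩]


/-- The two-colored subgraph used for Kempe chains. -/
def chainG (c : PC G n) (α β : Fin n) : SimpleGraph V where
  Adj u v := c.c u v = some α ∨ c.c u v = some β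
  symm := by constructor; intro u v h; rwa [c.symm v u]
  loopless := by
    constructor
    intro u h
    have : c.c u u ≠ none := by rcases h with h | h <;> simp [h]
    exact G.loopless.irrefl u (c.adj u u this)

noncomputable def swapFun (c : PC G n) (α β : Fin n) (x : V) : V → V → Option (Fin n) :=
  fun u v =>
    if (chainG c α β).Reachable x u ∧ (chainG c α β).Reachable x v then
      Option.map (Equiv.swap α β) (c.c u v)
    else c.c u v

lemma swapFun_eq_map {c : PC G n} {α β : Fin n} {x u : V} (v : V)
    (hru : (chainG c α β).Reachable x u) :
    swapFun c α β x u v = Option.map (Equiv.swap α β) (c.c u v) := by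
  by_cases hrv : (chainG c α β).Reachable x v
  · exact if_pos ⟨hru, hrv⟩
  · have hne : ¬(c.c u v = some α ∨ c.c u v = some β) := by
      intro h
      exact hrv (hru.trans (SimpleGraph.Adj.reachable (show (chainG c α β).Adj u v from h)))
    push_neg at hne
    rw [swapFun, if_neg (by tauto)]
    cases hc : c.c u v with
    | none => rfl
    | some γ =>
      have h1 : γ ≠ α := by rintro rfl; exact hne.1 hc
      have h2 : γ ≠ β := by rintro rfl; exact hne.2 hc
      simp [Equiv.swap_apply_of_ne_of_ne h1 h2]

lemma swapFun_eq_of_not {c : PC G n} {α β : Fin n} {x u : V} (v : V)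
    (hru : ¬ (chainG c α β).Reachable x u) :
    swapFun c α β x u v = c.c u v := if_neg (by tauto)

lemma swapFun_none_iff {c : PC G n} {α β : Fin n} {x u v : V} :
    swapFun c α β x u v = none ↔ c.c u v = none := by
  rw [swapFun]
  split <;> simp

noncomputable def swap (c : PC G n) (α β : Fin n) (x : V) : PC G n where
  c := swapFun c α β x
  symm := by
    intro u v
    rw [swapFun, swapFun, c.symm u v]
    by_cases h : (chainG c α β).Reachable x u ∧ (chainG c α β).Reachable x v
    · rw [if_pos h, if_pos (and_comm.mp h)]
    · rw [if_neg h, if_neg (fun hh => h (and_comm.mp hh))]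
  adj := by
    intro u v h
    rw [Ne, swapFun_none_iff] at h
    exact c.adj u v h
  proper := by
    intro u v w δ h1 h2
    by_cases hru : (chainG c α β).Reachable x u
    · rw [swapFun_eq_map v hru] at h1
      rw [swapFun_eq_map w hru] at h2
      rw [Option.map_eq_some_iff] at h1 h2
      obtain ⟨a, ha, hsa⟩ := h1
      obtain ⟨b, hb, hsb⟩ := h2
      have : a = b := (Equiv.swap α β).injective (by rw [hsa, hsb])
      subst this
      exact c.proper ha hb
    · rw [swapFun_eq_of_not v hru] at h1
      rw [swapFun_eq_of_not w hru] at h2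
      exact c.proper h1 h2

lemma swap_none_iff {c : PC G n} {α β : Fin n} {x u v : V} :
    (swap c α β x).c u v = none ↔ c.c u v = none := swapFun_none_iff

lemma free_swap_center {c : PC G n} {α β : Fin n} {x : V} (h : Free c x α) :
    Free (swap c α β x) x β := by
  intro u hc
  rw [show (swap c α β x).c = swapFun c α β x from rfl,
    swapFun_eq_map u (SimpleGraph.Reachable.refl x), Option.map_eq_some_iff] at hc
  obtain ⟨a, ha, hsa⟩ := hc
  have : a = α := by
    have h2 : (Equiv.swap α β) a = (Equiv.swap α β) α := by rw [hsa, Equiv.swap_apply_left]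
    exact (Equiv.swap α β).injective h2
  subst this
  exact h u ha

lemma free_swap_far {c : PC G n} {α β : Fin n} {x w : V} {γ : Fin n}
    (hw : ¬ (chainG c α β).Reachable x w) (h : Free c w γ) :
    Free (swap c α β x) w γ := by
  intro u hc
  rw [show (swap c α β x).c = swapFun c α β x from rfl, swapFun_eq_of_not u hw] at hc
  exact h u hc

lemma free_exists [Fintype V] [DecidableRel G.Adj] (c : PC G n)
    (hn : ∀ v, G.degree v < n) (v : V) : ∃ γ : Fin n, Free c v γ := by
  by_contra hcon
  push_neg at hcon
  simp only [Free, not_forall, not_not] at hcon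
  choose g hg using hcon
  have hinj : Function.Injective (fun γ : Fin n => (⟨g γ, by
      rw [SimpleGraph.mem_neighborFinset]
      exact c.adj v (g γ) (by rw [hg γ]; simp)⟩ : G.neighborFinset v)) := by
    intro γ1 γ2 h12
    have hgg : g γ1 = g γ2 := by simpa using h12
    have : (some γ1 : Option (Fin n)) = some γ2 := by rw [← hg γ1, hgg, hg γ2]
    simpa using this
  have := Fintype.card_le_of_injective _ hinj
  rw [Fintype.card_coe, Fintype.card_fin] at this
  exact absurd (lt_of_lt_of_le (hn v) this) (lt_irrefl _)


/-- In a graph of max degree ≤ 2, from a vertex of degree ≤ 1 one can reach at most one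
other vertex of degree ≤ 1. -/
lemma path_unique (N : ℕ) : ∀ (H : SimpleGraph V) (u w1 w2 : V)
    (p : H.Walk u w1) (q : H.Walk u w2), p.length ≤ N → p.IsPath → q.IsPath →
    (∀ v a b c', H.Adj v a → H.Adj v b → H.Adj v c' → a = b ∨ a = c' ∨ b = c') →
    (∀ a b, H.Adj u a → H.Adj u b → a = b) →
    (∀ a b, H.Adj w1 a → H.Adj w1 b → a = b) →
    (∀ a b, H.Adj w2 a → H.Adj w2 b → a = b) →
    w1 ≠ u → w2 ≠ u → w1 = w2 := by
  induction N with
  | zero =>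
    intro H u w1 w2 p q hlen hp hq deg2 degu degw1 degw2 hw1u hw2u
    exact absurd (SimpleGraph.Walk.eq_of_length_eq_zero (Nat.le_zero.mp hlen)).symm hw1u
  | succ N ih =>
    intro H u w1 w2 p q hlen hp hq deg2 degu degw1 degw2 hw1u hw2u
    cases p with
    | nil => exact absurd rfl hw1u
    | cons hua p' =>
      cases q with
      | nil => exact absurd rfl hw2u
      | cons hub q' =>
        rename_i a b
        have hab : a = b := degu _ _ hua hub
        subst hab
        rw [SimpleGraph.Walk.cons_isPath_iff] at hp hq
        by_cases haw1 : a = w1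
        · subst haw1
          cases q' with
          | nil => rfl
          | cons hac q'' =>
            rename_i c'
            exfalso
            have hcu : c' ≠ u := by
              rintro rfl
              exact hq.2 (by simp [SimpleGraph.Walk.support_cons,
                q''.start_mem_support])
            exact hcu (degw1 u c' hua.symm hac).symm
        · by_cases haw2 : a = w2
          · subst haw2
            cases p' with
            | nil => exact absurd rfl haw1
            | cons had p'' =>
              rename_i d
              exfalso
              have hdu : d ≠ u := by
                rintro rfl
                exact hp.2 (by simp [SimpleGraph.Walk.support_cons,
                  p''.start_mem_support])
              exact hdu (degw2 u d hua.symm had).symm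
          · set H' := H.deleteEdges {s(u, a)} with hH'
            have hH'le : ∀ z w', H'.Adj z w' → H.Adj z w' := by
              intro z w' h
              rw [hH', SimpleGraph.deleteEdges_adj] at h
              exact h.1
            have hedges : ∀ (z w' : V) (r : H.Walk z w'), u ∉ r.support →
                ∀ e ∈ r.edges, e ∈ H'.edgeSet := by
              intro z w' r hu e he
              induction e with
              | _ a' b' =>
                have hadj : H.Adj a' b' := r.adj_of_mem_edges he
                have ha' : a' ≠ u := fun h => hu (h ▸ r.fst_mem_support_of_mem_edges he)
                have hb' : b' ≠ u := fun h => hu (h ▸ r.snd_mem_support_of_mem_edges he)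
                rw [SimpleGraph.mem_edgeSet, hH', SimpleGraph.deleteEdges_adj]
                refine ⟨hadj, ?_⟩
                simp only [Set.mem_singleton_iff, Sym2.eq_iff]
                push_neg
                constructor
                · intro h; exact absurd h ha'
                · intro h h2; exact absurd h2 hb'
            have hp2path : (p'.transfer H' (hedges _ _ p' hp.2)).IsPath := by
              rw [SimpleGraph.Walk.isPath_def, SimpleGraph.Walk.support_transfer]
              exact (SimpleGraph.Walk.isPath_def _).mp hp.1
            have hq2path : (q'.transfer H' (hedges _ _ q' hq.2)).IsPath := by
              rw [SimpleGraph.Walk.isPath_def, SimpleGraph.Walk.support_transfer]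
              exact (SimpleGraph.Walk.isPath_def _).mp hq.1
            have hlen2 : (p'.transfer H' (hedges _ _ p' hp.2)).length ≤ N := by
              rw [SimpleGraph.Walk.length_transfer]
              have := hlen
              rw [SimpleGraph.Walk.length_cons] at this
              omega
            have hdega : ∀ b' c', H'.Adj a b' → H'.Adj a c' → b' = c' := by
              intro b' c' h1 h2
              have hb1 := hH'le _ _ h1
              have hc1 := hH'le _ _ h2
              have hne1 : b' ≠ u := by
                rintro rfl
                rw [hH', SimpleGraph.deleteEdges_adj] at h1
                exact h1.2 (by rw [Sym2.eq_swap]; exact Set.mem_singleton _)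
              have hne2 : c' ≠ u := by
                rintro rfl
                rw [hH', SimpleGraph.deleteEdges_adj] at h2
                exact h2.2 (by rw [Sym2.eq_swap]; exact Set.mem_singleton _)
              rcases deg2 a b' c' u hb1 hc1 hua.symm with h | h | h
              · exact h
              · exact absurd h hne1
              · exact absurd h hne2
            exact ih H' a w1 w2 _ _ hlen2 hp2path hq2path
              (fun v a' b' c' h1 h2 h3 => deg2 v a' b' c' (hH'le _ _ h1) (hH'le _ _ h2)
                (hH'le _ _ h3))
              hdega
              (fun a' b' h1 h2 => degw1 a' b' (hH'le _ _ h1) (hH'le _ _ h2))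
              (fun a' b' h1 h2 => degw2 a' b' (hH'le _ _ h1) (hH'le _ _ h2))
              (Ne.symm haw1) (Ne.symm haw2)

lemma reach_unique (H : SimpleGraph V) (x w1 w2 : V)
    (deg2 : ∀ v a b c', H.Adj v a → H.Adj v b → H.Adj v c' → a = b ∨ a = c' ∨ b = c')
    (degx : ∀ a b, H.Adj x a → H.Adj x b → a = b)
    (degw1 : ∀ a b, H.Adj w1 a → H.Adj w1 b → a = b)
    (degw2 : ∀ a b, H.Adj w2 a → H.Adj w2 b → a = b)
    (h1 : H.Reachable x w1) (h2 : H.Reachable x w2)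
    (hw1 : w1 ≠ x) (hw2 : w2 ≠ x) : w1 = w2 := by
  obtain ⟨p⟩ := h1
  obtain ⟨q⟩ := h2
  exact path_unique (p.toPath : H.Walk x w1).length H x w1 w2 p.toPath q.toPath le_rfl
    p.toPath.2 q.toPath.2 deg2 degx degw1 degw2 hw1 hw2


/-- Downshift the fan: iteratively move the color of `x–f (i+1)` onto `x–f i`. -/
noncomputable def dsh (c₀ : PC G n) (x : V) (f : ℕ → V) (σ : ℕ → Fin n) : ℕ → PC G n
  | 0 => c₀
  | (m+1) => assign (erase (dsh c₀ x f σ m) x (f (m+1))) x (f m) (σ m)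

section Dsh

variable {c₀ : PC G n} {x : V} {f : ℕ → V} {σ : ℕ → Fin n} {k : ℕ}
variable (hadj : ∀ i ≤ k, G.Adj x (f i))
variable (hinj : ∀ i ≤ k, ∀ j ≤ k, f i = f j → i = j)
variable (hσ1 : ∀ i < k, c₀.c x (f (i+1)) = some (σ i))
variable (hσ2 : ∀ i < k, Free c₀ (f i) (σ i))
variable (hnone0 : c₀.c x (f 0) = none)

include hadj hinj hσ1 hσ2 hnone0

lemma dsh_inv : ∀ m, m ≤ k →
    (∀ u v, u ≠ x → v ≠ x → (dsh c₀ x f σ m).c u v = c₀.c u v) ∧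
    (∀ j, j < m → (dsh c₀ x f σ m).c x (f j) = c₀.c x (f (j+1))) ∧
    ((dsh c₀ x f σ m).c x (f m) = none) ∧
    (∀ z, (∀ j, j ≤ m → z ≠ f j) → (dsh c₀ x f σ m).c x z = c₀.c x z) := by
  intro m
  induction m with
  | zero =>
    intro _
    exact ⟨fun u v _ _ => rfl, fun j hj => absurd hj (Nat.not_lt_zero j), hnone0,
      fun z _ => rfl⟩
  | succ m ih =>
    intro hm1
    have hm : m ≤ k := Nat.le_of_succ_le hm1
    have hmk : m < k := hm1
    obtain ⟨IA, IB, IC, ID⟩ := ih hm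
    have hfx : ∀ i, i ≤ k → f i ≠ x := fun i hi => (G.ne_of_adj (hadj i hi)).symm
    set cm := dsh c₀ x f σ m with hcm
    set ce := erase cm x (f (m+1)) with hce
    have ce_xv : ∀ v, v ≠ f (m+1) → ce.c x v = cm.c x v := by
      intro v hv
      refine erase_c_eq _ _ _ _ _ ?_
      rintro (⟨-, h⟩ | ⟨h, -⟩)
      · exact hv h
      · exact hfx (m+1) hm1 h.symm
    have ce_top : ce.c x (f (m+1)) = none := erase_c_pair _ _ _ _ _ (Or.inl ⟨rfl, rfl⟩)
    have ce_far : ∀ u v, u ≠ x → v ≠ x → ce.c u v = cm.c u v := by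
      intro u v hu hv
      refine erase_c_eq _ _ _ _ _ ?_
      rintro (⟨h, -⟩ | ⟨-, h⟩)
      · exact hu h
      · exact hv h
    have hσm1 : c₀.c x (f (m+1)) = some (σ m) := hσ1 m hmk
    have hfree1 : Free ce x (σ m) := by
      intro u hc
      by_cases hum : u = f (m+1)
      · rw [hum, ce_top] at hc; exact nomatch hc
      · rw [ce_xv u hum] at hc
        by_cases hex : ∃ l, l ≤ m ∧ u = f l
        · obtain ⟨l, hl, rfl⟩ := hex
          rcases lt_or_eq_of_le hl with hlt | rfl
          · rw [IB l hlt] at hc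
            have h1 := c₀.proper hc hσm1
            have := hinj (l+1) (by omega) (m+1) hm1 h1
            omega
          · rw [IC] at hc; exact nomatch hc
        · push_neg at hex
          rw [ID u (fun j hj => hex j hj)] at hc
          exact hum (c₀.proper hc hσm1)
    have hfree2 : Free ce (f m) (σ m) := by
      intro u hc
      by_cases hux : u = x
      · rw [hux, ce.symm] at hc
        have h1 : f m ≠ f (m+1) := fun h => by
          have := hinj m hm (m+1) hm1 h; omega
        rw [ce_xv (f m) h1, IC] at hc
        exact nomatch hc
      · rw [ce_far (f m) u (hfx m hm) hux, IA (f m) u (hfx m hm) hux] at hc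
        exact hσ2 m hmk u hc
    have hstep : (dsh c₀ x f σ (m+1)).c = upd ce.c x (f m) (some (σ m)) := by
      show (assign ce x (f m) (σ m)).c = _
      exact assign_c ce (hadj m hm) hfree1 hfree2
    refine ⟨?_, ?_, ?_, ?_⟩
    · intro u v hu hv
      rw [hstep, upd_of_not_pair ?_, ce_far u v hu hv, IA u v hu hv]
      rintro (⟨h, -⟩ | ⟨-, h⟩)
      · exact hu h
      · exact hv h
    · intro j' hj'
      rcases Nat.lt_succ_iff_lt_or_eq.mp hj' with hlt | rfl
      · have hne1 : f j' ≠ f m := fun h => by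
          have := hinj j' (by omega) m hm h; omega
        have hne2 : f j' ≠ f (m+1) := fun h => by
          have := hinj j' (by omega) (m+1) hm1 h; omega
        rw [hstep, upd_of_not_pair ?_, ce_xv _ hne2, IB j' hlt]
        rintro (⟨-, h⟩ | ⟨h, -⟩)
        · exact hne1 h
        · exact hfx m hm h.symm
      · rw [hstep, upd_of_pair (Or.inl ⟨rfl, rfl⟩)]
        exact hσm1.symm
    · have hne1 : f (m+1) ≠ f m := fun h => by
        have := hinj (m+1) hm1 m hm h; omega
      rw [hstep, upd_of_not_pair ?_, ce_top]
      rintro (⟨-, h⟩ | ⟨h, -⟩)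
      · exact hne1 h
      · exact hfx m hm h.symm
    · intro z hz
      rw [hstep, upd_of_not_pair ?_, ce_xv z (hz (m+1) le_rfl),
        ID z (fun j hj => hz j (Nat.le_succ_of_le hj))]
      rintro (⟨-, h⟩ | ⟨h, -⟩)
      · exact hz m (Nat.le_succ m) h
      · exact hfx m hm h.symm

lemma dsh_freeX {γ : Fin n} (hγ : Free c₀ x γ) :
    ∀ m, m ≤ k → Free (dsh c₀ x f σ m) x γ := by
  intro m hm u hc
  obtain ⟨IA, IB, IC, ID⟩ := dsh_inv hadj hinj hσ1 hσ2 hnone0 m hm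
  by_cases hex : ∃ l, l ≤ m ∧ u = f l
  · obtain ⟨l, hl, rfl⟩ := hex
    rcases lt_or_eq_of_le hl with hlt | rfl
    · rw [IB l hlt] at hc; exact hγ (f (l+1)) hc
    · rw [IC] at hc; exact nomatch hc
  · push_neg at hex
    rw [ID u (fun j hj => hex j hj)] at hc
    exact hγ u hc

lemma dsh_dom : ∀ m, m ≤ k → ∀ u v, (dsh c₀ x f σ m).c u v = none →
    (c₀.c u v = none ∧ ¬ Pair u v x (f 0)) ∨ Pair u v x (f m) := by
  intro m hm
  obtain ⟨IA, IB, IC, ID⟩ := dsh_inv hadj hinj hσ1 hσ2 hnone0 m hm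
  have hfx : ∀ i, i ≤ k → f i ≠ x := fun i hi => (G.ne_of_adj (hadj i hi)).symm
  have DOMx : ∀ v, (dsh c₀ x f σ m).c x v = none →
      (c₀.c x v = none ∧ ¬ Pair x v x (f 0)) ∨ Pair x v x (f m) := by
    intro v h
    by_cases hex : ∃ l, l ≤ m ∧ v = f l
    · obtain ⟨l, hl, rfl⟩ := hex
      rcases lt_or_eq_of_le hl with hlt | rfl
      · rw [IB l hlt, hσ1 l (lt_of_lt_of_le hlt hm)] at h
        exact nomatch h
      · exact Or.inr (Or.inl ⟨rfl, rfl⟩)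
    · push_neg at hex
      rw [ID v (fun j hj => hex j hj)] at h
      refine Or.inl ⟨h, ?_⟩
      rintro (⟨-, h0⟩ | ⟨h0, -⟩)
      · exact hex 0 (Nat.zero_le m) h0
      · exact hfx 0 (Nat.zero_le k) h0.symm
  intro u v h
  by_cases hu : u = x
  · rw [hu] at h
    rcases DOMx v h with ⟨h3, h4⟩ | h4
    · exact Or.inl ⟨by rw [hu]; exact h3, fun hp => h4 (hu ▸ hp)⟩
    · rcases h4 with ⟨-, h5⟩ | ⟨h5, h6⟩
      · exact Or.inr (Or.inl ⟨hu, h5⟩)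
      · exact Or.inr (Or.inr ⟨hu.trans h5, h6⟩)
  · by_cases hv : v = x
    · rw [hv] at h
      have h2 : (dsh c₀ x f σ m).c x u = none :=
        ((dsh c₀ x f σ m).symm x u).trans h
      rcases DOMx u h2 with ⟨h3, h4⟩ | h4
      · refine Or.inl ⟨by rw [hv, c₀.symm u x]; exact h3, ?_⟩
        rintro (⟨h5, h6⟩ | ⟨h5, h6⟩)
        · exact h4 (Or.inr ⟨hv.symm.trans h6, h5⟩)
        · exact h4 (Or.inl ⟨rfl, h5⟩)
      · rcases h4 with ⟨-, h5⟩ | ⟨h5, h6⟩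
        · exact Or.inr (Or.inr ⟨h5, hv⟩)
        · exact Or.inr (Or.inl ⟨h6, hv.trans h5⟩)
    · refine Or.inl ⟨by rw [← IA u v hu hv]; exact h, ?_⟩
      rintro (⟨h0, -⟩ | ⟨-, h0⟩)
      · exact hu h0
      · exact hv h0

end Dsh

lemma chain_deg2 (c : PC G n) (α β : Fin n) :
    ∀ v a b c', (chainG c α β).Adj v a → (chainG c α β).Adj v b →
      (chainG c α β).Adj v c' → a = b ∨ a = c' ∨ b = c' := by
  intro v a b c' h1 h2 h3
  rcases h1 with h1 | h1 <;> rcases h2 with h2 | h2 <;> rcases h3 with h3 | h3 <;>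
    first
      | exact Or.inl (c.proper h1 h2)
      | exact Or.inr (Or.inl (c.proper h1 h3))
      | exact Or.inr (Or.inr (c.proper h2 h3))

lemma chain_deg1_of_free {c : PC G n} {α β : Fin n} {v : V} (h : Free c v β) :
    ∀ a b, (chainG c α β).Adj v a → (chainG c α β).Adj v b → a = b := by
  intro a b h1 h2
  rcases h1 with h1 | h1
  · rcases h2 with h2 | h2
    · exact c.proper h1 h2
    · exact absurd h2 (h b)
  · exact absurd h1 (h a)

lemma reach_transfer (H2 H1 : SimpleGraph V) (x w wfirst : V) (hwx : w ≠ x)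
    (hr : H2.Reachable x w)
    (hfirst : ∀ z, H2.Adj x z → z = wfirst)
    (agree : ∀ a b, a ≠ x → b ≠ x → (H2.Adj a b ↔ H1.Adj a b)) :
    H1.Reachable wfirst w := by
  obtain ⟨p0⟩ := hr
  obtain ⟨p, hp⟩ := p0.toPath
  cases p with
  | nil => exact absurd rfl hwx
  | cons hxa p2 =>
    rename_i a
    have ha : a = wfirst := hfirst a hxa
    subst ha
    rw [SimpleGraph.Walk.cons_isPath_iff] at hp
    have hedges : ∀ e ∈ p2.edges, e ∈ H1.edgeSet := by
      intro e he
      induction e with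
      | _ a' b' =>
        have hadj : H2.Adj a' b' := p2.adj_of_mem_edges he
        have ha' : a' ≠ x := fun h => hp.2 (h ▸ p2.fst_mem_support_of_mem_edges he)
        have hb' : b' ≠ x := fun h => hp.2 (h ▸ p2.snd_mem_support_of_mem_edges he)
        exact (agree a' b' ha' hb').mp hadj
    exact ⟨p2.transfer H1 hedges⟩


lemma extend [Fintype V] [DecidableRel G.Adj] (hdeg : ∀ v, G.degree v < n)
    (c₀ : PC G n) (x y : V) (hxy : G.Adj x y) (hnone : c₀.c x y = none) :
    ∃ c' : PC G n, ∀ u v, c'.c u v = none → (c₀.c u v = none ∧ ¬ Pair u v x y) := by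
  obtain ⟨α, hα⟩ := free_exists c₀ hdeg x
  set P : ℕ → Prop := fun k => ∃ f : ℕ → V, ∃ σ : ℕ → Fin n,
    f 0 = y ∧ (∀ i ≤ k, G.Adj x (f i)) ∧ (∀ i ≤ k, ∀ j ≤ k, f i = f j → i = j) ∧
    (∀ i < k, c₀.c x (f (i+1)) = some (σ i) ∧ Free c₀ (f i) (σ i)) with hP
  have hP0 : P 0 := ⟨fun _ => y, fun _ => α, rfl, fun i _ => hxy,
    fun i hi j hj _ => by omega, fun i hi => absurd hi (Nat.not_lt_zero i)⟩
  have hPbound : ∀ k, P k → k < Fintype.card V := by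
    rintro k ⟨f, σ, hf0, hadj, hinj, hF4⟩
    have h1 : Function.Injective (fun i : Fin (k+1) => f i) := by
      intro i j hij
      exact Fin.ext (hinj i (Nat.le_of_lt_succ i.isLt) j (Nat.le_of_lt_succ j.isLt) hij)
    have h2 := Fintype.card_le_of_injective _ h1
    rw [Fintype.card_fin] at h2
    omega
  set k := Nat.findGreatest P (Fintype.card V) with hk
  have hPk : P k := Nat.findGreatest_spec (Nat.zero_le _) hP0
  have hmaxfan : ¬ P (k+1) := by
    intro hPk1
    have h1 := hPbound (k+1) hPk1
    have h2 := Nat.le_findGreatest h1.le hPk1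
    omega
  obtain ⟨f, σ, hf0, hadj, hinj, hF4⟩ := hPk
  have hσ1 : ∀ i < k, c₀.c x (f (i+1)) = some (σ i) := fun i hi => (hF4 i hi).1
  have hσ2 : ∀ i < k, Free c₀ (f i) (σ i) := fun i hi => (hF4 i hi).2
  have hnone0 : c₀.c x (f 0) = none := by rw [hf0]; exact hnone
  have hfx : ∀ i, i ≤ k → f i ≠ x := fun i hi => (G.ne_of_adj (hadj i hi)).symm
  obtain ⟨β, hβ⟩ := free_exists c₀ hdeg (f k)
  have INV := dsh_inv hadj hinj hσ1 hσ2 hnone0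
  have DOM := dsh_dom hadj hinj hσ1 hσ2 hnone0
  have FREEX := fun {γ : Fin n} (h : Free c₀ x γ) =>
    dsh_freeX hadj hinj hσ1 hσ2 hnone0 h
  have conclude : ∀ (m : ℕ), m ≤ k → ∀ (cc : PC G n) (β' : Fin n),
      (∀ u v, cc.c u v = none → (dsh c₀ x f σ m).c u v = none) →
      Free cc x β' → Free cc (f m) β' →
      ∃ c' : PC G n, ∀ u v, c'.c u v = none → (c₀.c u v = none ∧ ¬ Pair u v x y) := by
    intro m hm cc β' hdom hfr1 hfr2
    refine ⟨assign cc x (f m) β', ?_⟩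
    intro u v h
    rw [assign_c cc (hadj m hm) hfr1 hfr2] at h
    by_cases hp : Pair u v x (f m)
    · rw [upd_of_pair hp] at h; exact nomatch h
    · rw [upd_of_not_pair hp] at h
      rcases DOM m hm u v (hdom u v h) with ⟨h1, h2⟩ | h2
      · rw [hf0] at h2; exact ⟨h1, h2⟩
      · exact absurd h2 hp
  by_cases hbx : Free c₀ x β
  · refine conclude k le_rfl (dsh c₀ x f σ k) β (fun u v h => h) (FREEX hbx k le_rfl) ?_
    obtain ⟨IA, IB, IC, ID⟩ := INV k le_rfl
    intro u hc
    by_cases hux : u = x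
    · rw [hux, (dsh c₀ x f σ k).symm (f k) x, IC] at hc; exact nomatch hc
    · rw [IA (f k) u (hfx k le_rfl) hux] at hc; exact hβ u hc
  · have hexz : ∃ z, c₀.c x z = some β := by
      simp only [Free, not_forall, not_not] at hbx; exact hbx
    obtain ⟨z, hz⟩ := hexz
    have hzin : ∃ j, j ≤ k ∧ z = f j := by
      by_contra hcon
      push_neg at hcon
      apply hmaxfan
      set f' : ℕ → V := fun i => if i ≤ k then f i else z with hf'
      set σ' : ℕ → Fin n := fun i => if i < k then σ i else β with hσ'
      have hf'le : ∀ i, i ≤ k → f' i = f i := fun i h => if_pos h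
      have hf'gt : ∀ i, ¬ i ≤ k → f' i = z := fun i h => if_neg h
      have hσ'lt : ∀ i, i < k → σ' i = σ i := fun i h => if_pos h
      have hσ'ge : ∀ i, ¬ i < k → σ' i = β := fun i h => if_neg h
      refine ⟨f', σ', ?_, ?_, ?_, ?_⟩
      · rw [hf'le 0 (Nat.zero_le k)]; exact hf0
      · intro i hi
        by_cases h : i ≤ k
        · rw [hf'le i h]; exact hadj i h
        · rw [hf'gt i h]; exact c₀.adj x z (by rw [hz]; simp)
      · intro i hi j' hj' hij
        by_cases h1 : i ≤ k <;> by_cases h2 : j' ≤ k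
        · rw [hf'le i h1, hf'le j' h2] at hij; exact hinj i h1 j' h2 hij
        · rw [hf'le i h1, hf'gt j' h2] at hij; exact absurd hij.symm (hcon i h1)
        · rw [hf'gt i h1, hf'le j' h2] at hij; exact absurd hij (hcon j' h2)
        · omega
      · intro i hi
        by_cases h : i < k
        · rw [hf'le (i+1) h, hf'le i (by omega), hσ'lt i h]
          exact hF4 i h
        · have hik : i = k := by omega
          rw [hσ'ge i h, hf'le i (by omega), hf'gt (i+1) (by omega), hik]
          exact ⟨hz, hβ⟩
    obtain ⟨j, hjk, hzj⟩ := hzin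
    rw [hzj] at hz
    have hj0 : j ≠ 0 := by
      rintro rfl
      rw [hf0, hnone] at hz
      exact nomatch hz
    have hjltk : j < k := by
      rcases Nat.lt_or_ge j k with h | h
      · exact h
      · exfalso
        have hjk2 : j = k := by omega
        rw [hjk2] at hz
        exact hβ x (by rw [c₀.symm (f k) x]; exact hz)
    have hm1 : j - 1 + 1 = j := by omega
    have hm1k : j - 1 ≤ k := by omega
    have hσβ : σ (j-1) = β := by
      have h1 := hσ1 (j-1) (by omega)
      rw [hm1] at h1
      have h2 : some (σ (j-1)) = some β := h1.symm.trans hz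
      exact Option.some_injective _ h2
    obtain ⟨IA1, IB1, IC1, ID1⟩ := INV (j-1) hm1k
    obtain ⟨IA2, IB2, IC2, ID2⟩ := INV k le_rfl
    set c1 := dsh c₀ x f σ (j-1) with hc1
    set c2 := dsh c₀ x f σ k with hc2
    have Fc1α : Free c1 x α := FREEX hα (j-1) hm1k
    have Fc2α : Free c2 x α := FREEX hα k le_rfl
    have Fc1w1 : Free c1 (f (j-1)) β := by
      intro u hc
      by_cases hux : u = x
      · rw [hux, c1.symm (f (j-1)) x, IC1] at hc; exact nomatch hc
      · rw [IA1 _ u (hfx (j-1) hm1k) hux] at hc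
        have h2 := hσ2 (j-1) (by omega)
        rw [hσβ] at h2
        exact h2 u hc
    have Fc1w2 : Free c1 (f k) β := by
      intro u hc
      by_cases hux : u = x
      · rw [hux, c1.symm (f k) x] at hc
        have hne : ∀ l, l ≤ j - 1 → f k ≠ f l := by
          intro l hl h
          have := hinj k le_rfl l (by omega) h
          omega
        rw [ID1 (f k) hne] at hc
        have h3 := c₀.proper hc hz
        have := hinj k le_rfl j hjk h3
        omega
      · rw [IA1 _ u (hfx k le_rfl) hux] at hc
        exact hβ u hc
    have Fc2w2 : Free c2 (f k) β := by
      intro u hc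
      by_cases hux : u = x
      · rw [hux, c2.symm (f k) x, IC2] at hc; exact nomatch hc
      · rw [IA2 _ u (hfx k le_rfl) hux] at hc; exact hβ u hc
    have N1 : ∀ z', (chainG c1 α β).Adj x z' → z' = f j := by
      intro z' h
      rcases h with h | h
      · exact absurd h (Fc1α z')
      · by_cases hex : ∃ l, l ≤ j - 1 ∧ z' = f l
        · obtain ⟨l, hl, rfl⟩ := hex
          rcases lt_or_eq_of_le hl with hlt | rfl
          · rw [IB1 l hlt] at h
            have h2 := c₀.proper h hz
            have := hinj (l+1) (by omega) j hjk h2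
            omega
          · rw [IC1] at h; exact nomatch h
        · push_neg at hex
          rw [ID1 z' (fun l hl => hex l hl)] at h
          exact c₀.proper h hz
    have N2 : ∀ z', (chainG c2 α β).Adj x z' → z' = f (j-1) := by
      intro z' h
      rcases h with h | h
      · exact absurd h (Fc2α z')
      · by_cases hex : ∃ l, l ≤ k ∧ z' = f l
        · obtain ⟨l, hl, rfl⟩ := hex
          rcases lt_or_eq_of_le hl with hlt | rfl
          · rw [IB2 l hlt] at h
            have h2 := c₀.proper h hz
            have h4 := hinj (l+1) (by omega) j hjk h2
            have h5 : l = j - 1 := by omega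
            rw [h5]
          · rw [IC2] at h; exact nomatch h
        · push_neg at hex
          rw [ID2 z' (fun l hl => hex l hl)] at h
          exact absurd (c₀.proper h hz) (hex j hjk)
    have hw1x : f (j-1) ≠ x := hfx (j-1) hm1k
    have hw2x : f k ≠ x := hfx k le_rfl
    have hw12 : f (j-1) ≠ f k := fun h => by
      have := hinj (j-1) hm1k k le_rfl h; omega
    by_cases hreach : (chainG c1 α β).Reachable x (f (j-1))
    · have hnr2 : ¬ (chainG c2 α β).Reachable x (f k) := by
        intro hr2
        have hagree : ∀ a b, a ≠ x → b ≠ x →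
            ((chainG c2 α β).Adj a b ↔ (chainG c1 α β).Adj a b) := by
          intro a b ha hb
          show (c2.c a b = some α ∨ c2.c a b = some β) ↔
            (c1.c a b = some α ∨ c1.c a b = some β)
          rw [IA2 a b ha hb, IA1 a b ha hb]
        have hr1' : (chainG c1 α β).Reachable (f (j-1)) (f k) :=
          reach_transfer (chainG c2 α β) (chainG c1 α β) x (f k) (f (j-1))
            hw2x hr2 N2 hagree
        have hr1 : (chainG c1 α β).Reachable x (f k) := hreach.trans hr1'
        have h5 := reach_unique (chainG c1 α β) x (f (j-1)) (f k)
          (chain_deg2 c1 α β)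
          (fun a b h1 h2 => (N1 a h1).trans (N1 b h2).symm)
          (chain_deg1_of_free Fc1w1)
          (chain_deg1_of_free Fc1w2)
          hreach hr1 hw1x hw2x
        exact hw12 h5
      refine conclude k le_rfl (swap c2 α β x) β ?_ (free_swap_center Fc2α)
        (free_swap_far hnr2 Fc2w2)
      intro u v h
      exact swap_none_iff.mp h
    · refine conclude (j-1) hm1k (swap c1 α β x) β ?_ (free_swap_center Fc1α)
        (free_swap_far hreach Fc1w1)
      intro u v h
      exact swap_none_iff.mp h

lemma total_coloring [Fintype V] [DecidableRel G.Adj] (hdeg : ∀ v, G.degree v < n) :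
    ∃ c : PC G n, ∀ u v, G.Adj u v → c.c u v ≠ none := by
  have key : ∀ (N : ℕ) (c : PC G n),
      (Finset.filter (fun p : V × V => G.Adj p.1 p.2 ∧ c.c p.1 p.2 = none)
        Finset.univ).card ≤ N →
      ∃ c' : PC G n, ∀ u v, G.Adj u v → c'.c u v ≠ none := by
    intro N
    induction N with
    | zero =>
      intro c hc
      refine ⟨c, fun u v hadj hn => ?_⟩
      have hmem : (u, v) ∈ Finset.filter
          (fun p : V × V => G.Adj p.1 p.2 ∧ c.c p.1 p.2 = none) Finset.univ :=
        Finset.mem_filter.mpr ⟨Finset.mem_univ _, hadj, hn⟩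
      have hemp := Finset.card_eq_zero.mp (Nat.le_zero.mp hc)
      rw [hemp] at hmem
      exact absurd hmem (Finset.notMem_empty _)
    | succ N ih =>
      intro c hc
      by_cases hall : ∀ u v, G.Adj u v → c.c u v ≠ none
      · exact ⟨c, hall⟩
      · push_neg at hall
        obtain ⟨x, y, hxy, hnone⟩ := hall
        obtain ⟨c', hc'⟩ := extend hdeg c x y hxy hnone
        apply ih c'
        have hsub : Finset.filter
            (fun p : V × V => G.Adj p.1 p.2 ∧ c'.c p.1 p.2 = none) Finset.univ ⊆
            Finset.filter
            (fun p : V × V => G.Adj p.1 p.2 ∧ c.c p.1 p.2 = none) Finset.univ := by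
          intro p hp
          rw [Finset.mem_filter] at hp ⊢
          exact ⟨hp.1, hp.2.1, (hc' p.1 p.2 hp.2.2).1⟩
        have hmem : (x, y) ∈ Finset.filter
            (fun p : V × V => G.Adj p.1 p.2 ∧ c.c p.1 p.2 = none) Finset.univ :=
          Finset.mem_filter.mpr ⟨Finset.mem_univ _, hxy, hnone⟩
        have hnotmem : (x, y) ∉ Finset.filter
            (fun p : V × V => G.Adj p.1 p.2 ∧ c'.c p.1 p.2 = none) Finset.univ := by
          rw [Finset.mem_filter]
          rintro ⟨-, -, h2⟩
          exact (hc' x y h2).2 (Or.inl ⟨rfl, rfl⟩)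
        have hlt := Finset.card_lt_card
          ((Finset.ssubset_iff_of_subset hsub).mpr ⟨(x, y), hmem, hnotmem⟩)
        omega
  refine key (Finset.filter _ Finset.univ).card
    ⟨fun _ _ => none, fun _ _ => rfl, fun u v h => absurd rfl h,
      fun h _ => nomatch h⟩ le_rfl

end VizingProof

theorem vizing_theorem
    {V : Type*} [Fintype V] (G : SimpleGraph V) [DecidableRel G.Adj] :
    ∃ C : G.edgeSet → Fin (G.maxDegree + 1),
      ∀ e f : G.edgeSet, e ≠ f →
        (∃ v : V, v ∈ (e : Sym2 V) ∧ v ∈ (f : Sym2 V)) → C e ≠ C f := by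
  classical
  have hdeg : ∀ v, G.degree v < G.maxDegree + 1 :=
    fun v => Nat.lt_succ_of_le (G.degree_le_maxDegree v)
  obtain ⟨c, hc⟩ := VizingProof.total_coloring (G := G) hdeg
  set F : Sym2 V → Option (Fin (G.maxDegree + 1)) := Sym2.lift ⟨c.c, c.symm⟩ with hF
  have hFmk : ∀ a b : V, F s(a, b) = c.c a b := fun a b => rfl
  have hFsome : ∀ (e : Sym2 V), e ∈ G.edgeSet → (F e).isSome := by
    intro e
    induction e with
    | _ a b =>
      intro he
      rw [SimpleGraph.mem_edgeSet] at he
      rw [hFmk]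
      exact Option.isSome_iff_ne_none.mpr (hc a b he)
  refine ⟨fun e => (F e.1).get (hFsome e.1 e.2), ?_⟩
  rintro ⟨e, he⟩ ⟨f, hf⟩ hne ⟨v, hv1, hv2⟩ heq
  simp only [Subtype.coe_mk] at hv1 hv2
  have hne' : e ≠ f := fun h => hne (Subtype.ext h)
  have hspec1 := Sym2.other_spec hv1
  have hspec2 := Sym2.other_spec hv2
  have hFe : F e = F f := by
    have h1 := hFsome e he
    have h2 := hFsome f hf
    rw [← Option.some_get h1, ← Option.some_get h2]
    exact congrArg some heq
  rw [← hspec1, ← hspec2, hFmk, hFmk] at hFe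
  have h1 : (c.c v (Sym2.Mem.other hv1)).isSome := by
    have h3 := hFsome e he
    rw [← hspec1, hFmk] at h3
    exact h3
  cases hval : c.c v (Sym2.Mem.other hv1) with
  | none => rw [hval] at h1; simp at h1
  | some γ =>
    have h2 : c.c v (Sym2.Mem.other hv2) = some γ := by rw [← hFe, hval]
    have hoth := c.proper hval h2
    apply hne'
    rw [← hspec1, ← hspec2, hoth]
end
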